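/- For any rooted binary phylogenetic tree T on a taxon set X evolving under the symmetric 3-state model N_3 (not necessarily ultrametric), P_α(X) ≥ P_β(X), i.e. P(MP(f,T) = {α} | ρ = α) ≥ P(MP(f,T) = {β} | ρ = α). -/

import Mathlib

/-- A rooted binary phylogenetic tree: a `leaf` is a single taxon, and the
root of `node p₁ p₂ L R` has the roots of `L` and `R` as its two children,
attached by edges carrying one-specific-change probabilities `p₁` and `p₂`. -/
inductive PhyloTree : Type
  | leaf : PhyloTree
  | node (p₁ p₂ : ℝ) (L R : PhyloTree) : PhyloTree

namespace PhyloTree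

/-- The number of leaves (taxa) of the tree. -/
def nLeaves : PhyloTree → ℕ
  | leaf => 1
  | node _ _ L R => nLeaves L + nLeaves R

/-- All edge substitution probabilities of the tree lie in `[0, 1/3]`. -/
def valid : PhyloTree → Prop
  | leaf => True
  | node p₁ p₂ L R => 0 ≤ p₁ ∧ p₁ ≤ 1/3 ∧ 0 ≤ p₂ ∧ p₂ ≤ 1/3 ∧ valid L ∧ valid R

end PhyloTree

/-- Transition probabilities of the symmetric 3-state model `N₃`: conditional
on the upper endpoint of an edge with substitution probability `q` being in
state `a`, the lower endpoint is in each specific state `b ≠ a` with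
probability `q`, and in state `a` with probability `1 - 2q`. -/
noncomputable def trans3 (q : ℝ) (a b : Fin 3) : ℝ := if a = b then 1 - 2*q else q

/-- `charProb3 t a f` is the probability, conditional on the root of `t`
being in state `a`, that the leaves of `t` (read from left to right) are in
the states recorded by the list `f`.  States evolve independently along the
edges according to `trans3`. -/
noncomputable def charProb3 : PhyloTree → Fin 3 → List (Fin 3) → ℝ
  | .leaf, a, f => if f = [a] then 1 else 0
  | .node p₁ p₂ L R, a, f =>
      ∑ b : Fin 3, ∑ c : Fin 3, trans3 p₁ a b * trans3 p₂ a c *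
        charProb3 L b (f.take L.nLeaves) * charProb3 R c (f.drop L.nLeaves)

/-- Fitch's parsimony operation: `A ∩ B` if it is nonempty, `A ∪ B` otherwise. -/
def fitchOp {k : ℕ} (A B : Finset (Fin k)) : Finset (Fin k) :=
  if (A ∩ B).Nonempty then A ∩ B else A ∪ B

/-- The set `MP(f,T)` assigned to the root of `t` by the Fitch algorithm when
the leaves carry the character (list of leaf states) `f`. -/
def fitchSet3 : PhyloTree → List (Fin 3) → Finset (Fin 3)
  | .leaf, [b] => {b}
  | .leaf, _ => ∅
  | .node _ _ L R, f =>
      fitchOp (fitchSet3 L (f.take L.nLeaves)) (fitchSet3 R (f.drop L.nLeaves))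

/-- `rootProb3 t a R = P(MP(f,T) = R ∣ root state = a)`. -/
noncomputable def rootProb3 (t : PhyloTree) (a : Fin 3) (R : Finset (Fin 3)) : ℝ :=
  ∑ f : Fin t.nLeaves → Fin 3,
    if fitchSet3 t (List.ofFn f) = R then charProb3 t a (List.ofFn f) else 0

/-- The reconstruction accuracy
`RA(X) = ∑_{R ⊆ A, α ∈ R} (1/|R|) · P(MP(f,T) = R ∣ ρ = α)`, with `α := 0`. -/
noncomputable def RA3 (t : PhyloTree) : ℝ :=
  ∑ R : Finset (Fin 3),
    if (0 : Fin 3) ∈ R then (R.card : ℝ)⁻¹ * rootProb3 t 0 R else 0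

/-- `ultra3 t p`: the tree `t` is ultrametric, and the probability of one
specific state change from the root to any leaf is `p` (under `N₃`, the
one-specific-change probabilities compose along a path as
`p₁ ∘ q₁ = p₁ + q₁ - 3·p₁·q₁`). -/
def ultra3 : PhyloTree → ℝ → Prop
  | .leaf, p => p = 0
  | .node p₁ p₂ L R, p => ∃ q₁ q₂, ultra3 L q₁ ∧ ultra3 R q₂ ∧
      p = p₁ + q₁ - 3*p₁*q₁ ∧ p = p₂ + q₂ - 3*p₂*q₂


-- ===================== auxiliary lemmas =====================

lemma charProb3_map (σ : Equiv.Perm (Fin 3)) : ∀ (t : PhyloTree) (a : Fin 3) (l : List (Fin 3)),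
    charProb3 t (σ a) (l.map σ) = charProb3 t a l := by
  intro t
  induction t with
  | leaf =>
    intro a l
    have : l.map σ = [σ a] ↔ l = [a] := by
      constructor
      · intro h
        have := congrArg (List.map σ.symm) h
        simpa using this
      · intro h; simp [h]
    simp [charProb3, this]
  | node p₁ p₂ L R ihL ihR =>
    intro a l
    show (∑ b : Fin 3, ∑ c : Fin 3, _) = (∑ b : Fin 3, ∑ c : Fin 3, _)
    rw [← Equiv.sum_comp σ (fun b => ∑ c : Fin 3, trans3 p₁ (σ a) b * trans3 p₂ (σ a) _ * _ * _)]
    congr 1; funext b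
    rw [← Equiv.sum_comp σ]
    congr 1; funext c
    rw [← List.map_take, ← List.map_drop, ihL, ihR]
    simp [trans3, σ.injective.eq_iff]

lemma fitchSet3_map (σ : Equiv.Perm (Fin 3)) : ∀ (t : PhyloTree) (l : List (Fin 3)),
    fitchSet3 t (l.map σ) = (fitchSet3 t l).map σ.toEmbedding := by
  intro t
  induction t with
  | leaf =>
    intro l
    match l with
    | [] => simp [fitchSet3]
    | [b] => simp [fitchSet3]
    | b :: c :: l' => simp [fitchSet3]
  | node p₁ p₂ L R ihL ihR =>
    intro l
    rw [fitchSet3, fitchSet3, ← List.map_take, ← List.map_drop, ihL, ihR]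
    unfold fitchOp
    rw [← Finset.map_inter]
    by_cases h : ((fitchSet3 L (l.take L.nLeaves)) ∩ (fitchSet3 R (l.drop L.nLeaves))).Nonempty
    · simp [h]
    · simp [h, Finset.map_union]

lemma rootProb3_map (σ : Equiv.Perm (Fin 3)) (t : PhyloTree) (a : Fin 3) (S : Finset (Fin 3)) :
    rootProb3 t (σ a) (S.map σ.toEmbedding) = rootProb3 t a S := by
  rw [rootProb3, rootProb3]
  rw [← Equiv.sum_comp (Equiv.piCongrRight fun _ : Fin t.nLeaves => σ)]
  congr 1; funext f
  have h1 : List.ofFn ((Equiv.piCongrRight fun _ : Fin t.nLeaves => σ) f) = (List.ofFn f).map σ := by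
    rw [List.map_ofFn]; rfl
  rw [h1, fitchSet3_map, charProb3_map]
  congr 1
  simp [(Finset.map_injective σ.toEmbedding).eq_iff]

lemma sum_split (m n : ℕ) (F : (Fin (m+n) → Fin 3) → ℝ) :
    ∑ f : Fin (m+n) → Fin 3, F f =
      ∑ g : Fin m → Fin 3, ∑ h : Fin n → Fin 3,
        F (fun i => Sum.elim g h (finSumFinEquiv.symm i)) := by
  rw [← Equiv.sum_comp ((Equiv.sumArrowEquivProdArrow _ _ _).symm.trans
      (Equiv.arrowCongr finSumFinEquiv (Equiv.refl _))) F, Fintype.sum_prod_type]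
  rfl

lemma ofFn_elim (m n : ℕ) (g : Fin m → Fin 3) (h : Fin n → Fin 3) :
    List.ofFn (fun i => Sum.elim g h (finSumFinEquiv.symm i)) = List.ofFn g ++ List.ofFn h := by
  rw [List.ofFn_add]
  congr 1
  · apply congrArg; funext i
    rw [show ∀ hh, (Fin.castLE hh i : Fin (m+n)) = Fin.castAdd n i from fun _ => rfl]; simp
  · apply congrArg; funext i; simp

lemma sum_fiber_mul {ι κ : Type*} [Fintype ι] [Fintype κ]
    (k1 : ι → Finset (Fin 3)) (k2 : κ → Finset (Fin 3)) (x : ι → ℝ) (y : κ → ℝ)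
    (S : Finset (Fin 3)) (c : ℝ) :
    ∑ i, ∑ j, (if fitchOp (k1 i) (k2 j) = S then c * x i * y j else 0)
    = ∑ U : Finset (Fin 3), ∑ V : Finset (Fin 3), (if fitchOp U V = S then
        c * (∑ i, if k1 i = U then x i else 0) * (∑ j, if k2 j = V then y j else 0) else 0) := by
  rw [← Finset.sum_fiberwise Finset.univ k1
    (fun i => ∑ j, (if fitchOp (k1 i) (k2 j) = S then c * x i * y j else 0))]
  apply Finset.sum_congr rfl; intro U _
  rw [show (∑ V : Finset (Fin 3), (if fitchOp U V = S then
        c * (∑ i, if k1 i = U then x i else 0) * (∑ j, if k2 j = V then y j else 0) else 0))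
      = ∑ i ∈ Finset.univ.filter (fun i => k1 i = U), ∑ V : Finset (Fin 3),
          (if fitchOp U V = S then c * x i * (∑ j, if k2 j = V then y j else 0) else 0) from ?_]
  · apply Finset.sum_congr rfl; intro i hi
    have hki : k1 i = U := (Finset.mem_filter.mp hi).2
    rw [← Finset.sum_fiberwise Finset.univ k2
      (fun j => (if fitchOp (k1 i) (k2 j) = S then c * x i * y j else 0))]
    apply Finset.sum_congr rfl; intro V _
    rw [Finset.sum_filter]
    by_cases h : fitchOp U V = S
    · rw [if_pos h, Finset.mul_sum]
      apply Finset.sum_congr rfl; intro j _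
      by_cases h2 : k2 j = V
      · simp [h2, hki, h]
      · simp [h2]
    · rw [if_neg h, Finset.sum_eq_zero]
      intro j _
      by_cases h2 : k2 j = V
      · simp [h2, hki, h]
      · simp [h2]
  · rw [Finset.sum_comm]
    apply Finset.sum_congr rfl; intro V _
    rw [Finset.sum_filter]
    by_cases h : fitchOp U V = S
    · simp only [if_pos h]
      rw [mul_assoc, Finset.sum_mul_sum, Finset.mul_sum]
      apply Finset.sum_congr rfl; intro i _
      by_cases hk : k1 i = U
      · simp [hk, Finset.mul_sum, mul_assoc]
      · simp [hk]
    · simp [h]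

lemma sum4_comm {A B C D : Type*} [Fintype A] [Fintype B] [Fintype C] [Fintype D]
  (f : A → B → C → D → ℝ) :
    ∑ a, ∑ b, ∑ c, ∑ d, f a b c d = ∑ c, ∑ d, ∑ a, ∑ b, f a b c d :=
  calc ∑ a, ∑ b, ∑ c, ∑ d, f a b c d
      = ∑ a, ∑ c, ∑ b, ∑ d, f a b c d :=
        Finset.sum_congr rfl (fun _ _ => Finset.sum_comm)
    _ = ∑ c, ∑ a, ∑ b, ∑ d, f a b c d := Finset.sum_comm
    _ = ∑ c, ∑ a, ∑ d, ∑ b, f a b c d :=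
        Finset.sum_congr rfl (fun _ _ => Finset.sum_congr rfl (fun _ _ => Finset.sum_comm))
    _ = ∑ c, ∑ d, ∑ a, ∑ b, f a b c d :=
        Finset.sum_congr rfl (fun _ _ => Finset.sum_comm)

lemma rootProb3_node (p₁ p₂ : ℝ) (L R : PhyloTree) (a : Fin 3) (S : Finset (Fin 3)) :
    rootProb3 (.node p₁ p₂ L R) a S =
      ∑ b : Fin 3, ∑ c : Fin 3, ∑ U : Finset (Fin 3), ∑ V : Finset (Fin 3),
        (if fitchOp U V = S then
          trans3 p₁ a b * trans3 p₂ a c * rootProb3 L b U * rootProb3 R c V else 0) := by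
  have h0 : rootProb3 (.node p₁ p₂ L R) a S =
      ∑ f : Fin (L.nLeaves + R.nLeaves) → Fin 3,
        if fitchSet3 (.node p₁ p₂ L R) (List.ofFn f) = S
        then charProb3 (.node p₁ p₂ L R) a (List.ofFn f) else 0 := rfl
  rw [h0, sum_split]
  have htake : ∀ (g : Fin L.nLeaves → Fin 3) (l : List (Fin 3)),
      (List.ofFn g ++ l).take L.nLeaves = List.ofFn g := by
    intro g l; rw [List.take_left' (by simp)]
  have hdrop : ∀ (g : Fin L.nLeaves → Fin 3) (l : List (Fin 3)),
      (List.ofFn g ++ l).drop L.nLeaves = l := by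
    intro g l; rw [List.drop_left' (by simp)]
  have hstep : ∀ (g : Fin L.nLeaves → Fin 3) (h : Fin R.nLeaves → Fin 3),
      (if fitchSet3 (.node p₁ p₂ L R)
          (List.ofFn (fun i => Sum.elim g h (finSumFinEquiv.symm i))) = S
        then charProb3 (.node p₁ p₂ L R) a
          (List.ofFn (fun i => Sum.elim g h (finSumFinEquiv.symm i))) else 0)
      = ∑ b : Fin 3, ∑ c : Fin 3,
          (if fitchOp (fitchSet3 L (List.ofFn g)) (fitchSet3 R (List.ofFn h)) = S then
            trans3 p₁ a b * trans3 p₂ a c *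
              charProb3 L b (List.ofFn g) * charProb3 R c (List.ofFn h) else 0) := by
    intro g h
    rw [ofFn_elim]
    show (if fitchOp (fitchSet3 L ((List.ofFn g ++ List.ofFn h).take L.nLeaves))
            (fitchSet3 R ((List.ofFn g ++ List.ofFn h).drop L.nLeaves)) = S
          then ∑ b : Fin 3, ∑ c : Fin 3, trans3 p₁ a b * trans3 p₂ a c *
            charProb3 L b ((List.ofFn g ++ List.ofFn h).take L.nLeaves) *
            charProb3 R c ((List.ofFn g ++ List.ofFn h).drop L.nLeaves) else 0) = _
    rw [htake, hdrop]
    split_ifs with hc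
    · rfl
    · simp
  simp only [hstep]
  rw [sum4_comm (fun g h b c =>
      (if fitchOp (fitchSet3 L (List.ofFn g)) (fitchSet3 R (List.ofFn h)) = S then
        trans3 p₁ a b * trans3 p₂ a c *
          charProb3 L b (List.ofFn g) * charProb3 R c (List.ofFn h) else 0))]
  apply Finset.sum_congr rfl; intro b _
  apply Finset.sum_congr rfl; intro c _
  exact sum_fiber_mul (fun g => fitchSet3 L (List.ofFn g)) (fun h => fitchSet3 R (List.ofFn h))
    (fun g => charProb3 L b (List.ofFn g)) (fun h => charProb3 R c (List.ofFn h)) S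
    (trans3 p₁ a b * trans3 p₂ a c)

lemma fitchSet3_nonempty : ∀ (t : PhyloTree) (l : List (Fin 3)),
    l.length = t.nLeaves → (fitchSet3 t l).Nonempty := by
  intro t
  induction t with
  | leaf =>
    intro l hl
    match l with
    | [b] => exact ⟨b, by simp [fitchSet3]⟩
  | node p₁ p₂ L R ihL ihR =>
    intro l hl
    have hln : l.length = L.nLeaves + R.nLeaves := hl
    have hL : (l.take L.nLeaves).length = L.nLeaves := by
      rw [List.length_take, hln]; omega
    have hR : (l.drop L.nLeaves).length = R.nLeaves := by
      rw [List.length_drop, hln]; omega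
    obtain ⟨x, hx⟩ := ihL _ hL
    obtain ⟨y, hy⟩ := ihR _ hR
    rw [fitchSet3]
    unfold fitchOp
    split_ifs with h
    · exact h
    · exact ⟨x, Finset.mem_union_left _ hx⟩

lemma rootProb3_empty (t : PhyloTree) (a : Fin 3) : rootProb3 t a ∅ = 0 := by
  rw [rootProb3, Finset.sum_eq_zero]
  intro f _
  rw [if_neg]
  intro h
  obtain ⟨x, hx⟩ := fitchSet3_nonempty t (List.ofFn f) (by simp)
  rw [h] at hx
  exact absurd hx (Finset.notMem_empty x)

lemma trans3_nonneg {q : ℝ} (hq : 0 ≤ q) (hq3 : q ≤ 1/3) (a b : Fin 3) : 0 ≤ trans3 q a b := by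
  unfold trans3; split_ifs <;> linarith

lemma charProb3_nonneg : ∀ (t : PhyloTree), t.valid → ∀ (a : Fin 3) (l : List (Fin 3)),
    0 ≤ charProb3 t a l := by
  intro t
  induction t with
  | leaf => intro _ a l; rw [charProb3]; split_ifs <;> norm_num
  | node p₁ p₂ L R ihL ihR =>
    rintro ⟨hp1, hp13, hp2, hp23, hvL, hvR⟩ a l
    rw [charProb3]
    apply Finset.sum_nonneg; intro b _
    apply Finset.sum_nonneg; intro c _
    have h1 := trans3_nonneg hp1 hp13 a b
    have h2 := trans3_nonneg hp2 hp23 a c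
    have h3 := ihL hvL b (l.take L.nLeaves)
    have h4 := ihR hvR c (l.drop L.nLeaves)
    positivity

lemma rootProb3_nonneg (t : PhyloTree) (hv : t.valid) (a : Fin 3) (S : Finset (Fin 3)) :
    0 ≤ rootProb3 t a S := by
  rw [rootProb3]
  apply Finset.sum_nonneg; intro f _
  split_ifs
  · exact charProb3_nonneg t hv a _
  · exact le_rfl

lemma sum_finset_fin3 (F : Finset (Fin 3) → ℝ) :
    ∑ U : Finset (Fin 3), F U =
      F ∅ + F {0} + F {1} + F {2} + F {0,1} + F {0,2} + F {1,2} + F {0,1,2} := by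
  rw [show (Finset.univ : Finset (Finset (Fin 3))) =
      {∅, {0}, {1}, {2}, {0,1}, {0,2}, {1,2}, {0,1,2}} from by decide]
  rw [Finset.sum_insert (by decide), Finset.sum_insert (by decide),
    Finset.sum_insert (by decide), Finset.sum_insert (by decide),
    Finset.sum_insert (by decide), Finset.sum_insert (by decide),
    Finset.sum_insert (by decide), Finset.sum_singleton]
  ring

section ValueLemmas

variable (t : PhyloTree)

lemma v01 : rootProb3 t 0 {2} = rootProb3 t 0 {1} := by
  have h := rootProb3_map (Equiv.swap 1 2) t 0 {1}
  rwa [show (Equiv.swap (1:Fin 3) 2) 0 = 0 from by decide,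
    show ({1}:Finset (Fin 3)).map (Equiv.swap (1:Fin 3) 2).toEmbedding = {2} from by decide] at h

lemma v02 : rootProb3 t 0 {0,2} = rootProb3 t 0 {0,1} := by
  have h := rootProb3_map (Equiv.swap 1 2) t 0 {0,1}
  rwa [show (Equiv.swap (1:Fin 3) 2) 0 = 0 from by decide,
    show ({0,1}:Finset (Fin 3)).map (Equiv.swap (1:Fin 3) 2).toEmbedding = {0,2} from by decide] at h

lemma v03 : rootProb3 t 1 {0} = rootProb3 t 0 {1} := by
  have h := rootProb3_map (Equiv.swap 0 1) t 0 {1}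
  rw [show (Equiv.swap (0:Fin 3) 1) 0 = 1 from by decide,
    show ({1}:Finset (Fin 3)).map (Equiv.swap (0:Fin 3) 1).toEmbedding = {0} from by decide] at h
  exact h

lemma v04 : rootProb3 t 1 {1} = rootProb3 t 0 {0} := by
  have h := rootProb3_map (Equiv.swap 0 1) t 0 {0}
  rw [show (Equiv.swap (0:Fin 3) 1) 0 = 1 from by decide,
    show ({0}:Finset (Fin 3)).map (Equiv.swap (0:Fin 3) 1).toEmbedding = {1} from by decide] at h
  exact h

lemma v05 : rootProb3 t 1 {2} = rootProb3 t 0 {1} := by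
  have h := rootProb3_map (Equiv.swap 0 1) t 0 {2}
  rw [show (Equiv.swap (0:Fin 3) 1) 0 = 1 from by decide,
    show ({2}:Finset (Fin 3)).map (Equiv.swap (0:Fin 3) 1).toEmbedding = {2} from by decide] at h
  rw [v01 t] at h
  exact h

lemma v06 : rootProb3 t 1 {0,1} = rootProb3 t 0 {0,1} := by
  have h := rootProb3_map (Equiv.swap 0 1) t 0 {0,1}
  rw [show (Equiv.swap (0:Fin 3) 1) 0 = 1 from by decide,
    show ({0,1}:Finset (Fin 3)).map (Equiv.swap (0:Fin 3) 1).toEmbedding = {0,1} from by decide] at h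
  exact h

lemma v07 : rootProb3 t 1 {0,2} = rootProb3 t 0 {1,2} := by
  have h := rootProb3_map (Equiv.swap 0 1) t 0 {1,2}
  rw [show (Equiv.swap (0:Fin 3) 1) 0 = 1 from by decide,
    show ({1,2}:Finset (Fin 3)).map (Equiv.swap (0:Fin 3) 1).toEmbedding = {0,2} from by decide] at h
  exact h

lemma v08 : rootProb3 t 1 {1,2} = rootProb3 t 0 {0,1} := by
  have h := rootProb3_map (Equiv.swap 0 1) t 0 {0,2}
  rw [show (Equiv.swap (0:Fin 3) 1) 0 = 1 from by decide,
    show ({0,2}:Finset (Fin 3)).map (Equiv.swap (0:Fin 3) 1).toEmbedding = {1,2} from by decide] at h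
  rw [v02 t] at h
  exact h

lemma v09 : rootProb3 t 1 {0,1,2} = rootProb3 t 0 {0,1,2} := by
  have h := rootProb3_map (Equiv.swap 0 1) t 0 {0,1,2}
  rw [show (Equiv.swap (0:Fin 3) 1) 0 = 1 from by decide,
    show ({0,1,2}:Finset (Fin 3)).map (Equiv.swap (0:Fin 3) 1).toEmbedding = {0,1,2} from by decide] at h
  exact h

lemma v10 : rootProb3 t 2 {0} = rootProb3 t 0 {1} := by
  have h := rootProb3_map (Equiv.swap 0 2) t 0 {2}
  rw [show (Equiv.swap (0:Fin 3) 2) 0 = 2 from by decide,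
    show ({2}:Finset (Fin 3)).map (Equiv.swap (0:Fin 3) 2).toEmbedding = {0} from by decide] at h
  rw [v01 t] at h
  exact h

lemma v11 : rootProb3 t 2 {1} = rootProb3 t 0 {1} := by
  have h := rootProb3_map (Equiv.swap 0 2) t 0 {1}
  rw [show (Equiv.swap (0:Fin 3) 2) 0 = 2 from by decide,
    show ({1}:Finset (Fin 3)).map (Equiv.swap (0:Fin 3) 2).toEmbedding = {1} from by decide] at h
  exact h

lemma v12 : rootProb3 t 2 {2} = rootProb3 t 0 {0} := by
  have h := rootProb3_map (Equiv.swap 0 2) t 0 {0}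
  rw [show (Equiv.swap (0:Fin 3) 2) 0 = 2 from by decide,
    show ({0}:Finset (Fin 3)).map (Equiv.swap (0:Fin 3) 2).toEmbedding = {2} from by decide] at h
  exact h

lemma v13 : rootProb3 t 2 {0,1} = rootProb3 t 0 {1,2} := by
  have h := rootProb3_map (Equiv.swap 0 2) t 0 {1,2}
  rw [show (Equiv.swap (0:Fin 3) 2) 0 = 2 from by decide,
    show ({1,2}:Finset (Fin 3)).map (Equiv.swap (0:Fin 3) 2).toEmbedding = {0,1} from by decide] at h
  exact h

lemma v14 : rootProb3 t 2 {0,2} = rootProb3 t 0 {0,1} := by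
  have h := rootProb3_map (Equiv.swap 0 2) t 0 {0,2}
  rw [show (Equiv.swap (0:Fin 3) 2) 0 = 2 from by decide,
    show ({0,2}:Finset (Fin 3)).map (Equiv.swap (0:Fin 3) 2).toEmbedding = {0,2} from by decide] at h
  rw [v02 t] at h
  exact h

lemma v15 : rootProb3 t 2 {1,2} = rootProb3 t 0 {0,1} := by
  have h := rootProb3_map (Equiv.swap 0 2) t 0 {0,1}
  rw [show (Equiv.swap (0:Fin 3) 2) 0 = 2 from by decide,
    show ({0,1}:Finset (Fin 3)).map (Equiv.swap (0:Fin 3) 2).toEmbedding = {1,2} from by decide] at h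
  exact h

lemma v16 : rootProb3 t 2 {0,1,2} = rootProb3 t 0 {0,1,2} := by
  have h := rootProb3_map (Equiv.swap 0 2) t 0 {0,1,2}
  rw [show (Equiv.swap (0:Fin 3) 2) 0 = 2 from by decide,
    show ({0,1,2}:Finset (Fin 3)).map (Equiv.swap (0:Fin 3) 2).toEmbedding = {0,1,2} from by decide] at h
  exact h

end ValueLemmas

lemma leaf_val (S : Finset (Fin 3)) :
    rootProb3 .leaf 0 S = if S = {0} then 1 else 0 := by
  have h0 : rootProb3 .leaf 0 S = ∑ f : Fin 1 → Fin 3,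
      if fitchSet3 .leaf (List.ofFn f) = S then charProb3 .leaf 0 (List.ofFn f) else 0 := rfl
  rw [h0]
  rw [← Equiv.sum_comp (Equiv.funUnique (Fin 1) (Fin 3)).symm]
  rw [show (Finset.univ : Finset (Fin 3)) = {0, 1, 2} from by decide]
  rw [Finset.sum_insert (by decide), Finset.sum_insert (by decide), Finset.sum_singleton]
  have hofn : ∀ x : Fin 3,
      List.ofFn ((Equiv.funUnique (Fin 1) (Fin 3)).symm x) = [x] := by
    intro x; rfl
  simp only [hofn]
  show (if fitchSet3 .leaf [0] = S then charProb3 .leaf 0 [0] else 0)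
    + ((if fitchSet3 .leaf [1] = S then charProb3 .leaf 0 [1] else 0)
    + (if fitchSet3 .leaf [2] = S then charProb3 .leaf 0 [2] else 0)) = _
  show (if ({0} : Finset (Fin 3)) = S then charProb3 .leaf 0 [0] else 0)
    + ((if ({1} : Finset (Fin 3)) = S then charProb3 .leaf 0 [1] else 0)
    + (if ({2} : Finset (Fin 3)) = S then charProb3 .leaf 0 [2] else 0)) = _
  rw [show charProb3 .leaf 0 [0] = 1 from by rw [charProb3]; simp,
    show charProb3 .leaf 0 [1] = 0 from by rw [charProb3]; simp,
    show charProb3 .leaf 0 [2] = 0 from by rw [charProb3]; simp]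
  by_cases h : S = {0}
  · subst h; norm_num
  · rw [if_neg (fun hh => h hh.symm), if_neg h]
    simp only [ite_self, add_zero]

set_option maxHeartbeats 3200000 in
lemma main_ind : ∀ t : PhyloTree, t.valid →
    0 ≤ rootProb3 t 0 {0} - rootProb3 t 0 {1} ∧
    0 ≤ rootProb3 t 0 {0,1} - rootProb3 t 0 {1,2} := by
  intro t
  induction t with
  | leaf =>
    intro _
    rw [leaf_val, leaf_val, leaf_val, leaf_val]
    rw [if_pos rfl, if_neg (by decide), if_neg (by decide), if_neg (by decide)]
    norm_num
  | node p₁ p₂ L R ihL ihR =>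
    rintro ⟨hp1, hp13, hp2, hp23, hvL, hvR⟩
    obtain ⟨hdL, heL⟩ := ihL hvL
    obtain ⟨hdR, heR⟩ := ihR hvR
    have hsL := rootProb3_nonneg L hvL 0 {0}
    have htL := rootProb3_nonneg L hvL 0 {1}
    have huL := rootProb3_nonneg L hvL 0 {0,1}
    have hvL' := rootProb3_nonneg L hvL 0 {1,2}
    have hwL := rootProb3_nonneg L hvL 0 {0,1,2}
    have hsR := rootProb3_nonneg R hvR 0 {0}
    have htR := rootProb3_nonneg R hvR 0 {1}
    have huR := rootProb3_nonneg R hvR 0 {0,1}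
    have hvR' := rootProb3_nonneg R hvR 0 {1,2}
    have hwR := rootProb3_nonneg R hvR 0 {0,1,2}
    set sL := rootProb3 L 0 {0} with hsLdef
    set tL := rootProb3 L 0 {1} with htLdef
    set uL := rootProb3 L 0 {0,1} with huLdef
    set vL := rootProb3 L 0 {1,2} with hvLdef
    set wL := rootProb3 L 0 {0,1,2} with hwLdef
    set sR := rootProb3 R 0 {0} with hsRdef
    set tR := rootProb3 R 0 {1} with htRdef
    set uR := rootProb3 R 0 {0,1} with huRdef
    set vR := rootProb3 R 0 {1,2} with hvRdef
    set wR := rootProb3 R 0 {0,1,2} with hwRdef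
    have hs : rootProb3 (.node p₁ p₂ L R) 0 {0} = (1)*wL*sR + (2)*uL*uR + (2)*uL*sR + (1)*sL*wR + (2)*sL*uR + (1)*sL*sR + (2)*p₂*wL*tR + (-2)*p₂*wL*sR + (2)*p₂*uL*vR + (-2)*p₂*uL*uR + (4)*p₂*uL*tR + (-4)*p₂*uL*sR + (2)*p₂*sL*vR + (-2)*p₂*sL*uR + (2)*p₂*sL*tR + (-2)*p₂*sL*sR + (2)*p₁*vL*uR + (2)*p₁*vL*sR + (-2)*p₁*uL*uR + (-2)*p₁*uL*sR + (2)*p₁*tL*wR + (4)*p₁*tL*uR + (2)*p₁*tL*sR + (-2)*p₁*sL*wR + (-4)*p₁*sL*uR + (-2)*p₁*sL*sR + (2)*p₁*p₂*vL*vR + (-2)*p₁*p₂*vL*uR + (4)*p₁*p₂*vL*tR + (-4)*p₁*p₂*vL*sR + (-2)*p₁*p₂*uL*vR + (2)*p₁*p₂*uL*uR + (-4)*p₁*p₂*uL*tR + (4)*p₁*p₂*uL*sR + (4)*p₁*p₂*tL*vR + (-4)*p₁*p₂*tL*uR + (4)*p₁*p₂*tL*tR + (-4)*p₁*p₂*tL*sR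 + (-4)*p₁*p₂*sL*vR + (4)*p₁*p₂*sL*uR + (-4)*p₁*p₂*sL*tR + (4)*p₁*p₂*sL*sR := by
      rw [rootProb3_node]
      simp only [Fin.sum_univ_three, sum_finset_fin3]
      simp (config := { decide := true }) only [if_true, if_false]
      simp only [v01, v02, v03, v04, v05, v06, v07, v08, v09, v10, v11, v12, v13, v14, v15, v16,
        rootProb3_empty, trans3]
      simp (config := { decide := true }) only [if_true, if_false]
      simp only [← hsLdef, ← htLdef, ← huLdef, ← hvLdef, ← hwLdef,
        ← hsRdef, ← htRdef, ← huRdef, ← hvRdef, ← hwRdef]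
      ring
    have ht : rootProb3 (.node p₁ p₂ L R) 0 {1} = (1)*wL*tR + (1)*vL*uR + (1)*vL*tR + (1)*uL*vR + (1)*uL*tR + (1)*tL*wR + (1)*tL*vR + (1)*tL*uR + (1)*tL*tR + (-1)*p₂*wL*tR + (1)*p₂*wL*sR + (1)*p₂*vL*vR + (-1)*p₂*vL*uR + (-1)*p₂*vL*tR + (1)*p₂*vL*sR + (-2)*p₂*uL*vR + (2)*p₂*uL*uR + (-1)*p₂*uL*tR + (1)*p₂*uL*sR + (-1)*p₂*tL*vR + (1)*p₂*tL*uR + (-1)*p₂*tL*tR + (1)*p₂*tL*sR + (1)*p₁*vL*vR + (-2)*p₁*vL*uR + (-1)*p₁*vL*tR + (-1)*p₁*uL*vR + (2)*p₁*uL*uR + (1)*p₁*uL*tR + (-1)*p₁*tL*wR + (-1)*p₁*tL*vR + (-1)*p₁*tL*uR + (-1)*p₁*tL*tR + (1)*p₁*sL*wR + (1)*p₁*sL*vR + (1)*p₁*sL*uR + (1)*p₁*sL*tR + (-4)*p₁*p₂*vL*vR + (4)*p₁*p₂*vL*uR + (1)*p₁*p₂*vL*tR + (-1)*p₁*p₂*vL*sR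 + (4)*p₁*p₂*uL*vR + (-4)*p₁*p₂*uL*uR + (-1)*p₁*p₂*uL*tR + (1)*p₁*p₂*uL*sR + (1)*p₁*p₂*tL*vR + (-1)*p₁*p₂*tL*uR + (1)*p₁*p₂*tL*tR + (-1)*p₁*p₂*tL*sR + (-1)*p₁*p₂*sL*vR + (1)*p₁*p₂*sL*uR + (-1)*p₁*p₂*sL*tR + (1)*p₁*p₂*sL*sR := by
      rw [rootProb3_node]
      simp only [Fin.sum_univ_three, sum_finset_fin3]
      simp (config := { decide := true }) only [if_true, if_false]
      simp only [v01, v02, v03, v04, v05, v06, v07, v08, v09, v10, v11, v12, v13, v14, v15, v16,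
        rootProb3_empty, trans3]
      simp (config := { decide := true }) only [if_true, if_false]
      simp only [← hsLdef, ← htLdef, ← huLdef, ← hvLdef, ← hwLdef,
        ← hsRdef, ← htRdef, ← huRdef, ← hvRdef, ← hwRdef]
      ring
    have hu : rootProb3 (.node p₁ p₂ L R) 0 {0,1} = (1)*wL*uR + (1)*uL*wR + (1)*uL*uR + (1)*tL*sR + (1)*sL*tR + (1)*p₂*wL*vR + (-1)*p₂*wL*uR + (1)*p₂*uL*vR + (-1)*p₂*uL*uR + (2)*p₂*tL*tR + (-2)*p₂*tL*sR + (-1)*p₂*sL*tR + (1)*p₂*sL*sR + (1)*p₁*vL*wR + (1)*p₁*vL*uR + (-1)*p₁*uL*wR + (-1)*p₁*uL*uR + (2)*p₁*tL*tR + (-1)*p₁*tL*sR + (-2)*p₁*sL*tR + (1)*p₁*sL*sR + (1)*p₁*p₂*vL*vR + (-1)*p₁*p₂*vL*uR + (-1)*p₁*p₂*uL*vR + (1)*p₁*p₂*uL*uR + (-4)*p₁*p₂*tL*tR + (4)*p₁*p₂*tL*sR + (4)*p₁*p₂*sL*tR + (-4)*p₁*p₂*sL*sR := by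
      rw [rootProb3_node]
      simp only [Fin.sum_univ_three, sum_finset_fin3]
      simp (config := { decide := true }) only [if_true, if_false]
      simp only [v01, v02, v03, v04, v05, v06, v07, v08, v09, v10, v11, v12, v13, v14, v15, v16,
        rootProb3_empty, trans3]
      simp (config := { decide := true }) only [if_true, if_false]
      simp only [← hsLdef, ← htLdef, ← huLdef, ← hvLdef, ← hwLdef,
        ← hsRdef, ← htRdef, ← huRdef, ← hvRdef, ← hwRdef]
      ring
    have hv : rootProb3 (.node p₁ p₂ L R) 0 {1,2} = (1)*wL*vR + (1)*vL*wR + (1)*vL*vR + (2)*tL*tR + (-2)*p₂*wL*vR + (2)*p₂*wL*uR + (-2)*p₂*vL*vR + (2)*p₂*vL*uR + (-2)*p₂*tL*tR + (2)*p₂*tL*sR + (-2)*p₁*vL*wR + (-2)*p₁*vL*vR + (2)*p₁*uL*wR + (2)*p₁*uL*vR + (-2)*p₁*tL*tR + (2)*p₁*sL*tR + (4)*p₁*p₂*vL*vR + (-4)*p₁*p₂*vL*uR + (-4)*p₁*p₂*uL*vR + (4)*p₁*p₂*uL*uR + (2)*p₁*p₂*tL*tR + (-2)*p₁*p₂*tL*sR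 + (-2)*p₁*p₂*sL*tR + (2)*p₁*p₂*sL*sR := by
      rw [rootProb3_node]
      simp only [Fin.sum_univ_three, sum_finset_fin3]
      simp (config := { decide := true }) only [if_true, if_false]
      simp only [v01, v02, v03, v04, v05, v06, v07, v08, v09, v10, v11, v12, v13, v14, v15, v16,
        rootProb3_empty, trans3]
      simp (config := { decide := true }) only [if_true, if_false]
      simp only [← hsLdef, ← htLdef, ← huLdef, ← hvLdef, ← hwLdef,
        ← hsRdef, ← htRdef, ← huRdef, ← hvRdef, ← hwRdef]
      ring
    constructor
    · rw [hs, ht]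
      have hF00 : 0 ≤ wL*(sR-tR) + (sL-tL)*wR + sL*(sR-tR) + tR*(sL-tL) + uL*(uR-vR) + uR*(uL-vL) + 2*(uL*(sR-tR)) + tR*(uL-vL) + 2*(uR*(sL-tL)) + tL*(uR-vR) :=
        add_nonneg (add_nonneg (add_nonneg (add_nonneg (add_nonneg (add_nonneg (add_nonneg
          (add_nonneg (add_nonneg
          (mul_nonneg hwL hdR) (mul_nonneg hdL hwR)) (mul_nonneg hsL hdR))
          (mul_nonneg htR hdL)) (mul_nonneg huL heR)) (mul_nonneg huR heL))
          (by nlinarith [mul_nonneg huL hdR])) (mul_nonneg htR heL))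
          (by nlinarith [mul_nonneg huR hdL])) (mul_nonneg htL heR)
      have hF10 : 0 ≤ wL*(sR-tR) + (1/3)*(vL*(uR-vR)) + (2/3)*(vL*(sR-tR)) + (2/3)*(uL*(uR-vR)) + (4/3)*(uL*(sR-tR)) + (2/3)*(tL*(uR-vR)) + (2/3)*(tL*(sR-tR)) + (1/3)*(sL*(uR-vR)) + (1/3)*(sL*(sR-tR)) := by
        have a1 := mul_nonneg hwL hdR
        have a2 := mul_nonneg hvL' heR
        have a3 := mul_nonneg hvL' hdR
        have a4 := mul_nonneg huL heR
        have a5 := mul_nonneg huL hdR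
        have a6 := mul_nonneg htL heR
        have a7 := mul_nonneg htL hdR
        have a8 := mul_nonneg hsL heR
        have a9 := mul_nonneg hsL hdR
        linarith
      have hF01 : 0 ≤ (1/3)*((uL-vL)*vR) + (2/3)*((uL-vL)*uR) + (2/3)*((uL-vL)*tR) + (1/3)*((uL-vL)*sR) + (sL-tL)*wR + (2/3)*((sL-tL)*vR) + (4/3)*((sL-tL)*uR) + (2/3)*((sL-tL)*tR) + (1/3)*((sL-tL)*sR) := by
        have a1 := mul_nonneg heL hvR'
        have a2 := mul_nonneg heL huR
        have a3 := mul_nonneg heL htR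
        have a4 := mul_nonneg heL hsR
        have a5 := mul_nonneg hdL hwR
        have a6 := mul_nonneg hdL hvR'
        have a7 := mul_nonneg hdL huR
        have a8 := mul_nonneg hdL htR
        have a9 := mul_nonneg hdL hsR
        linarith
      have id1 : ((1)*wL*sR + (2)*uL*uR + (2)*uL*sR + (1)*sL*wR + (2)*sL*uR + (1)*sL*sR + (2)*p₂*wL*tR + (-2)*p₂*wL*sR + (2)*p₂*uL*vR + (-2)*p₂*uL*uR + (4)*p₂*uL*tR + (-4)*p₂*uL*sR + (2)*p₂*sL*vR + (-2)*p₂*sL*uR + (2)*p₂*sL*tR + (-2)*p₂*sL*sR + (2)*p₁*vL*uR + (2)*p₁*vL*sR + (-2)*p₁*uL*uR + (-2)*p₁*uL*sR + (2)*p₁*tL*wR + (4)*p₁*tL*uR + (2)*p₁*tL*sR + (-2)*p₁*sL*wR + (-4)*p₁*sL*uR + (-2)*p₁*sL*sR + (2)*p₁*p₂*vL*vR + (-2)*p₁*p₂*vL*uR + (4)*p₁*p₂*vL*tR + (-4)*p₁*p₂*vL*sR + (-2)*p₁*p₂*uL*vR + (2)*p₁*p₂*uL*uR + (-4)*p₁*p₂*uL*tR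 + (4)*p₁*p₂*uL*sR + (4)*p₁*p₂*tL*vR + (-4)*p₁*p₂*tL*uR + (4)*p₁*p₂*tL*tR + (-4)*p₁*p₂*tL*sR + (-4)*p₁*p₂*sL*vR + (4)*p₁*p₂*sL*uR + (-4)*p₁*p₂*sL*tR + (4)*p₁*p₂*sL*sR) - ((1)*wL*tR + (1)*vL*uR + (1)*vL*tR + (1)*uL*vR + (1)*uL*tR + (1)*tL*wR + (1)*tL*vR + (1)*tL*uR + (1)*tL*tR + (-1)*p₂*wL*tR + (1)*p₂*wL*sR + (1)*p₂*vL*vR + (-1)*p₂*vL*uR + (-1)*p₂*vL*tR + (1)*p₂*vL*sR + (-2)*p₂*uL*vR + (2)*p₂*uL*uR + (-1)*p₂*uL*tR + (1)*p₂*uL*sR + (-1)*p₂*tL*vR + (1)*p₂*tL*uR + (-1)*p₂*tL*tR + (1)*p₂*tL*sR + (1)*p₁*vL*vR + (-2)*p₁*vL*uR + (-1)*p₁*vL*tR + (-1)*p₁*uL*vR + (2)*p₁*uL*uR + (1)*p₁*uL*tR + (-1)*p₁*tL*wR + (-1)*p₁*tL*vR + (-1)*p₁*tL*uR + (-1)*p₁*tL*tR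 + (1)*p₁*sL*wR + (1)*p₁*sL*vR + (1)*p₁*sL*uR + (1)*p₁*sL*tR + (-4)*p₁*p₂*vL*vR + (4)*p₁*p₂*vL*uR + (1)*p₁*p₂*vL*tR + (-1)*p₁*p₂*vL*sR + (4)*p₁*p₂*uL*vR + (-4)*p₁*p₂*uL*uR + (-1)*p₁*p₂*uL*tR + (1)*p₁*p₂*uL*sR + (1)*p₁*p₂*tL*vR + (-1)*p₁*p₂*tL*uR + (1)*p₁*p₂*tL*tR + (-1)*p₁*p₂*tL*sR + (-1)*p₁*p₂*sL*vR + (1)*p₁*p₂*sL*uR + (-1)*p₁*p₂*sL*tR + (1)*p₁*p₂*sL*sR) =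
          9*(((1/3-p₁)*(1/3-p₂))*(wL*(sR-tR) + (sL-tL)*wR + sL*(sR-tR) + tR*(sL-tL) + uL*(uR-vR) + uR*(uL-vL) + 2*(uL*(sR-tR)) + tR*(uL-vL) + 2*(uR*(sL-tL)) + tL*(uR-vR))) + 9*(((1/3-p₁)*p₂)*((1/3)*((uL-vL)*vR) + (2/3)*((uL-vL)*uR) + (2/3)*((uL-vL)*tR) + (1/3)*((uL-vL)*sR) + (sL-tL)*wR + (2/3)*((sL-tL)*vR) + (4/3)*((sL-tL)*uR) + (2/3)*((sL-tL)*tR) + (1/3)*((sL-tL)*sR)))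
            + 9*((p₁*(1/3-p₂))*(wL*(sR-tR) + (1/3)*(vL*(uR-vR)) + (2/3)*(vL*(sR-tR)) + (2/3)*(uL*(uR-vR)) + (4/3)*(uL*(sR-tR)) + (2/3)*(tL*(uR-vR)) + (2/3)*(tL*(sR-tR)) + (1/3)*(sL*(uR-vR)) + (1/3)*(sL*(sR-tR)))) := by ring
      have c1 := mul_nonneg (mul_nonneg (by linarith : (0:ℝ) ≤ 1/3-p₁)
        (by linarith : (0:ℝ) ≤ 1/3-p₂)) hF00
      have c2 := mul_nonneg (mul_nonneg (by linarith : (0:ℝ) ≤ 1/3-p₁) hp2) hF01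
      have c3 := mul_nonneg (mul_nonneg hp1 (by linarith : (0:ℝ) ≤ 1/3-p₂)) hF10
      linarith
    · rw [hu, hv]
      have hG00 : 0 ≤ (uL-vL)*(wR+uR) + (uR-vR)*(wL+vL) + tL*(sR-tR) + tR*(sL-tL) := by
        have a1 := mul_nonneg heL (add_nonneg hwR huR)
        have a2 := mul_nonneg heR (add_nonneg hwL hvL')
        have a3 := mul_nonneg htL hdR
        have a4 := mul_nonneg htR hdL
        linarith
      have hG10 : 0 ≤ (uR-vR)*(wL + (1/3)*vL + (2/3)*uL) + (sR-tR)*((2/3)*tL + (1/3)*sL) := by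
        have a1 := mul_nonneg heR (by linarith : (0:ℝ) ≤ wL + (1/3)*vL + (2/3)*uL)
        have a2 := mul_nonneg hdR (by linarith : (0:ℝ) ≤ (2/3)*tL + (1/3)*sL)
        linarith
      have hG01 : 0 ≤ (uL-vL)*(wR + (1/3)*vR + (2/3)*uR) + (sL-tL)*((2/3)*tR + (1/3)*sR) := by
        have a1 := mul_nonneg heL (by linarith : (0:ℝ) ≤ wR + (1/3)*vR + (2/3)*uR)
        have a2 := mul_nonneg hdL (by linarith : (0:ℝ) ≤ (2/3)*tR + (1/3)*sR)
        linarith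
      have id2 : ((1)*wL*uR + (1)*uL*wR + (1)*uL*uR + (1)*tL*sR + (1)*sL*tR + (1)*p₂*wL*vR + (-1)*p₂*wL*uR + (1)*p₂*uL*vR + (-1)*p₂*uL*uR + (2)*p₂*tL*tR + (-2)*p₂*tL*sR + (-1)*p₂*sL*tR + (1)*p₂*sL*sR + (1)*p₁*vL*wR + (1)*p₁*vL*uR + (-1)*p₁*uL*wR + (-1)*p₁*uL*uR + (2)*p₁*tL*tR + (-1)*p₁*tL*sR + (-2)*p₁*sL*tR + (1)*p₁*sL*sR + (1)*p₁*p₂*vL*vR + (-1)*p₁*p₂*vL*uR + (-1)*p₁*p₂*uL*vR + (1)*p₁*p₂*uL*uR + (-4)*p₁*p₂*tL*tR + (4)*p₁*p₂*tL*sR + (4)*p₁*p₂*sL*tR + (-4)*p₁*p₂*sL*sR) - ((1)*wL*vR + (1)*vL*wR + (1)*vL*vR + (2)*tL*tR + (-2)*p₂*wL*vR + (2)*p₂*wL*uR + (-2)*p₂*vL*vR + (2)*p₂*vL*uR + (-2)*p₂*tL*tR + (2)*p₂*tL*sR + (-2)*p₁*vL*wR + (-2)*p₁*vL*vR + (2)*p₁*uL*wR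 + (2)*p₁*uL*vR + (-2)*p₁*tL*tR + (2)*p₁*sL*tR + (4)*p₁*p₂*vL*vR + (-4)*p₁*p₂*vL*uR + (-4)*p₁*p₂*uL*vR + (4)*p₁*p₂*uL*uR + (2)*p₁*p₂*tL*tR + (-2)*p₁*p₂*tL*sR + (-2)*p₁*p₂*sL*tR + (2)*p₁*p₂*sL*sR) =
          9*(((1/3-p₁)*(1/3-p₂))*((uL-vL)*(wR+uR) + (uR-vR)*(wL+vL) + tL*(sR-tR) + tR*(sL-tL))) + 9*(((1/3-p₁)*p₂)*((uL-vL)*(wR + (1/3)*vR + (2/3)*uR) + (sL-tL)*((2/3)*tR + (1/3)*sR)))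
            + 9*((p₁*(1/3-p₂))*((uR-vR)*(wL + (1/3)*vL + (2/3)*uL) + (sR-tR)*((2/3)*tL + (1/3)*sL))) := by ring
      have c1 := mul_nonneg (mul_nonneg (by linarith : (0:ℝ) ≤ 1/3-p₁)
        (by linarith : (0:ℝ) ≤ 1/3-p₂)) hG00
      have c2 := mul_nonneg (mul_nonneg (by linarith : (0:ℝ) ≤ 1/3-p₁) hp2) hG01
      have c3 := mul_nonneg (mul_nonneg hp1 (by linarith : (0:ℝ) ≤ 1/3-p₂)) hG10
      linarith


/-- For any rooted binary phylogenetic tree under `N₃` (not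
necessarily ultrametric), `P_α(X) ≥ P_β(X)`. -/
theorem rootProb3_alpha_ge_beta (t : PhyloTree) (hn : 2 ≤ t.nLeaves)
    (hv : t.valid) :
    rootProb3 t 0 {0} ≥ rootProb3 t 0 {1} := by
  have h := (main_ind t hv).1
  linarith
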